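/- Let X(t) be a symmetric compound Poisson process. Then limsup_{u→∞} P(sup_{0≤t≤1} X(t) > u) / P(X(1) > u) < 2 (strict inequality). -/

import Mathlib

open MeasureTheory ProbabilityTheory Filter Finset
open scoped ENNReal



lemma aux_sum_symm {Ω : Type*} [MeasurableSpace Ω] (μ : Measure Ω) [IsProbabilityMeasure μ]
    (X : ℕ → Ω → ℝ) (hXmeas : ∀ k, Measurable (X k))
    (hXindep : iIndepFun X μ)
    (hXid : ∀ k, Measure.map (X k) μ = Measure.map (X 0) μ)
    (hXsym : Measure.map (X 0) μ = Measure.map (fun ω => -X 0 ω) μ)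
    (s : Finset ℕ) :
    μ.map (fun ω => ∑ i ∈ s, X i ω) = μ.map (fun ω => -∑ i ∈ s, X i ω) := by
  classical
  induction s using Finset.induction_on with
  | empty => simp
  | insert i s hi ih =>
      have hg : Measurable (fun ω => ∑ j ∈ s, X j ω) :=
        Finset.measurable_sum s (fun j _ => hXmeas j)
      have hf : Measurable (X i) := hXmeas i
      have hind : IndepFun (X i) (fun ω => ∑ j ∈ s, X j ω) μ := by
        have h := (hXindep.indepFun_finset_sum_of_notMem hXmeas hi).symm
        have hfun : (∑ j ∈ s, X j) = fun ω => ∑ j ∈ s, X j ω := by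
          ext ω; simp
        rwa [hfun] at h
      have hindneg : IndepFun (fun ω => -X i ω) (fun ω => -∑ j ∈ s, X j ω) μ :=
        hind.comp measurable_neg measurable_neg
      have hmapXi : μ.map (fun ω => -X i ω) = μ.map (X i) := by
        have h1 : μ.map (fun ω => -X i ω) = (μ.map (X i)).map Neg.neg := by
          rw [Measure.map_map measurable_neg (hXmeas i)]; rfl
        have h2 : μ.map (fun ω => -X 0 ω) = (μ.map (X 0)).map Neg.neg := by
          rw [Measure.map_map measurable_neg (hXmeas 0)]; rfl
        rw [h1, hXid i, ← h2, ← hXsym]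
      have key : ∀ (f g : Ω → ℝ), Measurable f → Measurable g → IndepFun f g μ →
          μ.map (fun ω => f ω + g ω)
            = (((μ.map f).prod (μ.map g)).map (fun p : ℝ × ℝ => p.1 + p.2)) := by
        intro f g hfm hgm hfg
        rw [← (indepFun_iff_map_prod_eq_prod_map_map hfm.aemeasurable hgm.aemeasurable).mp hfg,
          Measure.map_map measurable_add (hfm.prodMk hgm)]
        rfl
      have e1 : μ.map (fun ω => ∑ j ∈ insert i s, X j ω)
          = μ.map (fun ω => X i ω + ∑ j ∈ s, X j ω) := by
        congr 1; funext ω; rw [Finset.sum_insert hi]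
      have e2 : μ.map (fun ω => -∑ j ∈ insert i s, X j ω)
          = μ.map (fun ω => (-X i ω) + (-∑ j ∈ s, X j ω)) := by
        congr 1; funext ω; rw [Finset.sum_insert hi]; ring
      rw [e1, e2, key _ _ hf hg hind, key (fun ω => -X i ω) (fun ω => -∑ j ∈ s, X j ω) hf.neg hg.neg hindneg, hmapXi, ← ih]


lemma aux_half {Ω : Type*} [MeasurableSpace Ω] (μ : Measure Ω) [IsProbabilityMeasure μ]
    (T : Ω → ℝ) (hT : Measurable T)
    (hsym : μ.map T = μ.map (fun ω => -T ω)) :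
    (2⁻¹ : ℝ≥0∞) ≤ μ {ω | 0 ≤ T ω} := by
  have h1 : μ {ω | 0 ≤ T ω} = μ.map T (Set.Ici 0) := by
    rw [Measure.map_apply hT measurableSet_Ici]; rfl
  have h2 : μ.map (fun ω => -T ω) (Set.Ici 0) = μ {ω | T ω ≤ 0} := by
    rw [Measure.map_apply (show Measurable (fun ω => -T ω) from hT.neg) measurableSet_Ici]
    congr 1
    ext ω
    simp [neg_nonneg]
  have heq : μ {ω | 0 ≤ T ω} = μ {ω | T ω ≤ 0} := by rw [h1, hsym, h2]
  have hunion : (Set.univ : Set Ω) ⊆ {ω | 0 ≤ T ω} ∪ {ω | T ω ≤ 0} := by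
    intro ω _
    rcases le_total 0 (T ω) with h | h
    · exact Or.inl h
    · exact Or.inr h
  have hone : (1 : ℝ≥0∞) ≤ μ {ω | 0 ≤ T ω} + μ {ω | T ω ≤ 0} := by
    calc (1 : ℝ≥0∞) = μ Set.univ := (measure_univ).symm
    _ ≤ μ ({ω | 0 ≤ T ω} ∪ {ω | T ω ≤ 0}) := measure_mono hunion
    _ ≤ _ := measure_union_le _ _
  rw [← heq, ← two_mul] at hone
  calc (2⁻¹ : ℝ≥0∞) = 2⁻¹ * 1 := (mul_one _).symm
  _ ≤ 2⁻¹ * (2 * μ {ω | 0 ≤ T ω}) := by exact mul_le_mul_right hone _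
  _ = (2⁻¹ * 2) * μ {ω | 0 ≤ T ω} := (mul_assoc _ _ _).symm
  _ = μ {ω | 0 ≤ T ω} := by
      rw [ENNReal.inv_mul_cancel (by norm_num) (by norm_num), one_mul]


lemma aux_tail (l : ℝ) (hl : 0 < l) (k : ℕ) :
    ∑' m : ℕ, ENNReal.ofReal (Real.exp (-l) * l ^ (k + m) / (Nat.factorial (k + m)))
      ≤ ENNReal.ofReal (Real.exp l)
        * ENNReal.ofReal (Real.exp (-l) * l ^ k / (Nat.factorial k)) := by
  have hexp : Real.exp l = ∑' n : ℕ, l ^ n / (Nat.factorial n) := by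
    rw [Real.exp_eq_exp_ℝ, NormedSpace.exp_eq_tsum_div]
  have hterm : ∀ m : ℕ,
      Real.exp (-l) * l ^ (k + m) / (Nat.factorial (k + m))
        ≤ (Real.exp (-l) * l ^ k / (Nat.factorial k)) * (l ^ m / (Nat.factorial m)) := by
    intro m
    have hfact : ((Nat.factorial k * Nat.factorial m : ℕ) : ℝ)
        ≤ ((Nat.factorial (k + m) : ℕ) : ℝ) := by
      exact_mod_cast Nat.le_of_dvd (Nat.factorial_pos _)
        (Nat.factorial_mul_factorial_dvd_factorial_add k m)
    have hnum : (0:ℝ) ≤ Real.exp (-l) * l ^ (k + m) := by positivity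
    have h1 : Real.exp (-l) * l ^ (k + m) / (Nat.factorial (k + m))
        ≤ Real.exp (-l) * l ^ (k + m) / ((Nat.factorial k : ℝ) * (Nat.factorial m : ℝ)) := by
      apply div_le_div_of_nonneg_left hnum _ _
      · positivity
      · exact_mod_cast hfact
    calc Real.exp (-l) * l ^ (k + m) / (Nat.factorial (k + m))
        ≤ Real.exp (-l) * l ^ (k + m) / ((Nat.factorial k : ℝ) * (Nat.factorial m : ℝ)) := h1
      _ = (Real.exp (-l) * l ^ k / (Nat.factorial k)) * (l ^ m / (Nat.factorial m)) := by
          rw [pow_add]; field_simp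
  calc ∑' m : ℕ, ENNReal.ofReal (Real.exp (-l) * l ^ (k + m) / (Nat.factorial (k + m)))
      ≤ ∑' m : ℕ, ENNReal.ofReal
          ((Real.exp (-l) * l ^ k / (Nat.factorial k)) * (l ^ m / (Nat.factorial m))) :=
        ENNReal.tsum_le_tsum (fun m => ENNReal.ofReal_le_ofReal (hterm m))
    _ = ∑' m : ℕ, ENNReal.ofReal (Real.exp (-l) * l ^ k / (Nat.factorial k))
          * ENNReal.ofReal (l ^ m / (Nat.factorial m)) := by
        congr 1; funext m
        rw [ENNReal.ofReal_mul (by positivity)]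
    _ = ENNReal.ofReal (Real.exp (-l) * l ^ k / (Nat.factorial k))
          * ∑' m : ℕ, ENNReal.ofReal (l ^ m / (Nat.factorial m)) := ENNReal.tsum_mul_left
    _ = ENNReal.ofReal (Real.exp (-l) * l ^ k / (Nat.factorial k))
          * ENNReal.ofReal (Real.exp l) := by
        rw [← ENNReal.ofReal_tsum_of_nonneg (fun m => by positivity)
          (Real.summable_pow_div_factorial l), ← hexp]
    _ = _ := mul_comm _ _


lemma aux_key {Ω : Type*} [MeasurableSpace Ω] (μ : Measure Ω) [IsProbabilityMeasure μ]
    (N : ℝ → Ω → ℕ) (X : ℕ → Ω → ℝ) (l : ℝ) (hl : 0 < l)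
    (hNmeas : ∀ t, Measurable (N t))
    (hN0 : ∀ ω, N 0 ω = 0)
    (hNmono : ∀ ω, ∀ ⦃s t : ℝ⦄, s ≤ t → N s ω ≤ N t ω)
    (hNincr : ∀ s t : ℝ, 0 ≤ s → s ≤ t → ∀ n : ℕ,
        μ {ω | N t ω - N s ω = n}
          = ENNReal.ofReal (Real.exp (-(l * (t - s))) * (l * (t - s)) ^ n
              / (Nat.factorial n)))
    (hXmeas : ∀ k, Measurable (X k))
    (hXindep : iIndepFun X μ)
    (hXid : ∀ k, Measure.map (X k) μ = Measure.map (X 0) μ)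
    (hXsym : Measure.map (X 0) μ = Measure.map (fun ω => -X 0 ω) μ)
    (hNX : IndepFun (fun ω => fun t : ℝ => N t ω) (fun ω => fun k : ℕ => X k ω) μ)
    (u : ℝ) :
    μ {ω | (⨆ t : Set.Icc (0:ℝ) 1, ∑ i ∈ range (N (t : ℝ) ω), X i ω) > u}
      ≤ ENNReal.ofReal (2 / (1 + Real.exp (-l)))
          * μ {ω | ∑ i ∈ range (N 1 ω), X i ω > u} := by
  classical
  have hexppos : 0 < Real.exp (-l) := Real.exp_pos _
  set Xp : Ω → ℕ → ℝ := fun ω i => X i ω with hXp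
  have hXpmeas : Measurable Xp := measurable_pi_lambda _ (fun i => hXmeas i)
  set N1 : Ω → ℕ := fun ω => N 1 ω with hN1def
  have hN1meas : Measurable N1 := hNmeas 1
  set sA : ℕ → Set (ℕ → ℝ) := fun k =>
    {v | u < ∑ i ∈ range k, v i} ∩
      ⋂ (j : ℕ), ⋂ (_ : j < k), {v | ∑ i ∈ range j, v i ≤ u} with hsA
  set sD : ℕ → ℕ → Set (ℕ → ℝ) := fun k n => {v | 0 ≤ ∑ i ∈ Ico k n, v i} with hsD
  have hvsum : ∀ s : Finset ℕ, Measurable (fun v : ℕ → ℝ => ∑ i ∈ s, v i) :=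
    fun s => Finset.measurable_sum s (fun i _ => measurable_pi_apply i)
  have hsAmeas : ∀ k, MeasurableSet (sA k) := by
    intro k
    refine (measurableSet_lt measurable_const (hvsum (range k))).inter ?_
    exact MeasurableSet.iInter fun j => MeasurableSet.iInter fun _ =>
      measurableSet_le (hvsum (range j)) measurable_const
  have hsDmeas : ∀ k n, MeasurableSet (sD k n) := fun k n =>
    measurableSet_le measurable_const (hvsum (Ico k n))
  have hsAmem : ∀ (k : ℕ) (w : ℕ → ℝ), w ∈ sA k ↔
      (u < ∑ i ∈ range k, w i ∧ ∀ j < k, ∑ i ∈ range j, w i ≤ u) := by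
    intro k w
    simp only [hsA, Set.mem_inter_iff, Set.mem_setOf_eq, Set.mem_iInter]
  set A : ℕ → Set Ω := fun k => Xp ⁻¹' (sA k) with hA
  set D : ℕ → ℕ → Set Ω := fun k n => Xp ⁻¹' (sD k n) with hD
  have hAmem : ∀ (k : ℕ) (ω : Ω), ω ∈ A k ↔
      (u < ∑ i ∈ range k, X i ω ∧ ∀ j < k, ∑ i ∈ range j, X i ω ≤ u) := by
    intro k ω
    rw [hA]
    exact hsAmem k (Xp ω)
  have hDmem : ∀ (k n : ℕ) (ω : Ω), ω ∈ D k n ↔ 0 ≤ ∑ i ∈ Ico k n, X i ω := by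
    intro k n ω
    rw [hD]
    rfl
  have hAmeasble : ∀ k, MeasurableSet (A k) := fun k => hXpmeas (hsAmeas k)
  have hDmeasble : ∀ k n, MeasurableSet (D k n) := fun k n => hXpmeas (hsDmeas k n)
  -- independence of the X-path and N 1
  have hIndXN : IndepFun Xp N1 μ := by
    have h := (hNX.symm).comp measurable_id (measurable_pi_apply (1:ℝ))
    exact h
  have hfactN : ∀ (s : Set (ℕ → ℝ)), MeasurableSet s → ∀ (t : Set ℕ),
      μ (Xp ⁻¹' s ∩ N1 ⁻¹' t) = μ (Xp ⁻¹' s) * μ (N1 ⁻¹' t) := by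
    intro s hs t
    exact hIndXN.measure_inter_preimage_eq_mul s t hs (MeasurableSpace.measurableSet_top ..)
  -- independence of A k and D k n
  have hsplitAD : ∀ k n : ℕ, μ (A k ∩ D k n) = μ (A k) * μ (D k n) := by
    intro k n
    have hdisj : Disjoint (range k) (Ico k n) := by
      rw [range_eq_Ico]; exact Finset.Ico_disjoint_Ico_consecutive 0 k n
    have hind := hXindep.indepFun_finset (range k) (Ico k n) hdisj hXmeas
    set φ : ∀ (s : Finset ℕ), ((i : s) → ℝ) → (ℕ → ℝ) :=
      fun s v i => if h : i ∈ s then v ⟨i, h⟩ else 0 with hφ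
    have hφmeas : ∀ s : Finset ℕ, Measurable (φ s) := by
      intro s
      apply measurable_pi_lambda
      intro i
      by_cases h : i ∈ s
      · simp only [hφ, dif_pos h]; exact measurable_pi_apply _
      · simp only [hφ, dif_neg h]; exact measurable_const
    have hcomp := hind.comp (hφmeas (range k)) (hφmeas (Ico k n))
    have hsum1 : ∀ (ω : Ω) (j : ℕ), j ≤ k →
        ∑ i ∈ range j, φ (range k) (fun i : range k => X i ω) i
          = ∑ i ∈ range j, X i ω := by
      intro ω j hj
      apply Finset.sum_congr rfl
      intro i hi
      have hik : i ∈ range k := mem_range.mpr (lt_of_lt_of_le (mem_range.mp hi) hj)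
      simp only [hφ, dif_pos hik]
    have hsum2 : ∀ ω : Ω,
        ∑ i ∈ Ico k n, φ (Ico k n) (fun i : Ico k n => X i ω) i
          = ∑ i ∈ Ico k n, X i ω := by
      intro ω
      apply Finset.sum_congr rfl
      intro i hi
      simp only [hφ, dif_pos hi]
    have hAeq : ((φ (range k)) ∘ (fun a (i : range k) => X i a)) ⁻¹' (sA k) = A k := by
      ext ω
      rw [Set.mem_preimage, Function.comp_apply, hsAmem, hAmem]
      constructor
      · rintro ⟨h1, h2⟩
        refine ⟨by rwa [hsum1 ω k le_rfl] at h1, fun j hj => ?_⟩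
        have := h2 j hj
        rwa [hsum1 ω j hj.le] at this
      · rintro ⟨h1, h2⟩
        refine ⟨by rwa [hsum1 ω k le_rfl], fun j hj => ?_⟩
        rw [hsum1 ω j hj.le]
        exact h2 j hj
    have hDeq : ((φ (Ico k n)) ∘ (fun a (i : Ico k n) => X i a)) ⁻¹' (sD k n) = D k n := by
      ext ω
      rw [Set.mem_preimage, Function.comp_apply, hDmem]
      simp only [hsD, Set.mem_setOf_eq]
      rw [hsum2 ω]
    have h := hcomp.measure_inter_preimage_eq_mul (sA k) (sD k n) (hsAmeas k) (hsDmeas k n)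
    rwa [hAeq, hDeq] at h
  -- the half bound
  have hDhalf : ∀ k n : ℕ, (2⁻¹ : ℝ≥0∞) ≤ μ (D k n) := by
    intro k n
    have hsym' := aux_sum_symm μ X hXmeas hXindep hXid hXsym (Ico k n)
    have h := aux_half μ (fun ω => ∑ i ∈ Ico k n, X i ω)
      (Finset.measurable_sum _ fun i _ => hXmeas i) hsym'
    have hDset : {ω | 0 ≤ ∑ i ∈ Ico k n, X i ω} = D k n := by
      ext ω; rw [hDmem]; rfl
    rwa [hDset] at h
  have hDone : ∀ k, μ (D k k) = 1 := by
    intro k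
    have : D k k = Set.univ := by
      ext ω
      simp [hDmem k k ω]
    rw [this, measure_univ]
  -- Poisson distribution of N 1
  have hq : ∀ n : ℕ, μ (N1 ⁻¹' {n})
      = ENNReal.ofReal (Real.exp (-l) * l ^ n / (Nat.factorial n)) := by
    intro n
    have h := hNincr 0 1 le_rfl zero_le_one n
    have hseteq : {ω | N 1 ω - N 0 ω = n} = N1 ⁻¹' {n} := by
      ext ω
      simp [hN0 ω, hN1def]
    rw [hseteq] at h
    simpa using h
  have hGeq : ∀ k : ℕ, μ (N1 ⁻¹' Set.Ici k) = ∑' m : ℕ, μ (N1 ⁻¹' {k + m}) := by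
    intro k
    have hun : N1 ⁻¹' Set.Ici k = ⋃ m : ℕ, N1 ⁻¹' {k + m} := by
      ext ω
      simp only [Set.mem_preimage, Set.mem_Ici, Set.mem_iUnion, Set.mem_singleton_iff]
      exact le_iff_exists_add
    rw [hun]
    refine measure_iUnion ?_ (fun m => hN1meas (measurableSet_singleton _))
    intro m m' hmm
    refine Set.disjoint_left.mpr fun ω h1 h2 => hmm ?_
    have h1' : N1 ω = k + m := h1
    have h2' : N1 ω = k + m' := h2
    omega
  have htail : ∀ k : ℕ, ENNReal.ofReal (Real.exp (-l)) * μ (N1 ⁻¹' Set.Ici k)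
      ≤ μ (N1 ⁻¹' {k}) := by
    intro k
    have h1 : μ (N1 ⁻¹' Set.Ici k) ≤ ENNReal.ofReal (Real.exp l) * μ (N1 ⁻¹' {k}) := by
      rw [hGeq k, hq k]
      calc ∑' m : ℕ, μ (N1 ⁻¹' {k + m})
          = ∑' m : ℕ, ENNReal.ofReal
              (Real.exp (-l) * l ^ (k + m) / (Nat.factorial (k + m))) :=
            tsum_congr fun m => hq (k + m)
        _ ≤ _ := aux_tail l hl k
    calc ENNReal.ofReal (Real.exp (-l)) * μ (N1 ⁻¹' Set.Ici k)
        ≤ ENNReal.ofReal (Real.exp (-l)) * (ENNReal.ofReal (Real.exp l) * μ (N1 ⁻¹' {k})) :=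
          mul_le_mul_right h1 _
      _ = (ENNReal.ofReal (Real.exp (-l)) * ENNReal.ofReal (Real.exp l)) * μ (N1 ⁻¹' {k}) :=
          (mul_assoc _ _ _).symm
      _ = μ (N1 ⁻¹' {k}) := by
          rw [← ENNReal.ofReal_mul hexppos.le, ← Real.exp_add]
          norm_num
  -- numerator
  have hMsub : {ω | (⨆ t : Set.Icc (0:ℝ) 1, ∑ i ∈ range (N (t : ℝ) ω), X i ω) > u}
      ⊆ ⋃ k : ℕ, A k ∩ N1 ⁻¹' Set.Ici k := by
    intro ω hω
    haveI : Nonempty (Set.Icc (0:ℝ) 1) := ⟨⟨0, by constructor <;> norm_num⟩⟩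
    have hω' : u < ⨆ t : Set.Icc (0:ℝ) 1, ∑ i ∈ range (N (t : ℝ) ω), X i ω := hω
    obtain ⟨t, ht⟩ := exists_lt_of_lt_ciSup hω'
    have hP : ∃ j : ℕ, u < ∑ i ∈ range j, X i ω := ⟨N (t : ℝ) ω, ht⟩
    have hk1 : u < ∑ i ∈ range (Nat.find hP), X i ω := Nat.find_spec hP
    have hk2 : ∀ j < Nat.find hP, ∑ i ∈ range j, X i ω ≤ u :=
      fun j hj => le_of_not_gt (Nat.find_min hP hj)
    have hk3 : Nat.find hP ≤ N (t : ℝ) ω := Nat.find_min' hP ht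
    have hk4 : N (t : ℝ) ω ≤ N 1 ω := hNmono ω t.2.2
    refine Set.mem_iUnion.mpr ⟨Nat.find hP, (hAmem _ ω).mpr ⟨hk1, hk2⟩, ?_⟩
    exact le_trans hk3 hk4
  have hAdisj : Pairwise (Function.onFun Disjoint fun k => A k ∩ N1 ⁻¹' Set.Ici k) := by
    intro k k' hkk
    refine Set.disjoint_left.mpr fun ω h1 h2 => ?_
    obtain ⟨hA1, -⟩ := h1
    obtain ⟨hA2, -⟩ := h2
    obtain ⟨hA1a, hA1b⟩ := (hAmem k ω).mp hA1
    obtain ⟨hA2a, hA2b⟩ := (hAmem k' ω).mp hA2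
    rcases lt_or_gt_of_ne hkk with h | h
    · exact absurd hA1a (not_lt.mpr (hA2b k h))
    · exact absurd hA2a (not_lt.mpr (hA1b k' h))
  have hnum : μ {ω | (⨆ t : Set.Icc (0:ℝ) 1, ∑ i ∈ range (N (t : ℝ) ω), X i ω) > u}
      ≤ ∑' k : ℕ, μ (A k) * μ (N1 ⁻¹' Set.Ici k) := by
    refine le_trans (measure_mono hMsub) ?_
    rw [measure_iUnion hAdisj (fun k =>
      (hAmeasble k).inter (hN1meas (MeasurableSpace.measurableSet_top ..)))]
    exact le_of_eq (tsum_congr fun k => hfactN (sA k) (hsAmeas k) (Set.Ici k))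
  -- denominator
  set E : ℕ × ℕ → Set Ω :=
    fun p => (A p.1 ∩ D p.1 (p.1 + p.2)) ∩ N1 ⁻¹' {p.1 + p.2} with hE
  have hEmeas : ∀ p, MeasurableSet (E p) := fun p =>
    ((hAmeasble p.1).inter (hDmeasble _ _)).inter (hN1meas (measurableSet_singleton _))
  have hEdisj : Pairwise (Function.onFun Disjoint E) := by
    intro p p' hpp
    refine Set.disjoint_left.mpr fun ω h1 h2 => ?_
    obtain ⟨⟨hA1, -⟩, hQ1⟩ := h1
    obtain ⟨⟨hA2, -⟩, hQ2⟩ := h2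
    have hQ1' : N1 ω = p.1 + p.2 := hQ1
    have hQ2' : N1 ω = p'.1 + p'.2 := hQ2
    obtain ⟨hA1a, hA1b⟩ := (hAmem p.1 ω).mp hA1
    obtain ⟨hA2a, hA2b⟩ := (hAmem p'.1 ω).mp hA2
    have hk : p.1 = p'.1 := by
      by_contra hne
      rcases lt_or_gt_of_ne hne with h | h
      · exact absurd hA1a (not_lt.mpr (hA2b p.1 h))
      · exact absurd hA2a (not_lt.mpr (hA1b p'.1 h))
    exact hpp (Prod.ext hk (by omega))
  have hEsub : ∀ p : ℕ × ℕ, E p ⊆ {ω | ∑ i ∈ range (N 1 ω), X i ω > u} := by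
    intro p ω hω
    obtain ⟨⟨h1, h2⟩, h3⟩ := hω
    obtain ⟨h1a, -⟩ := (hAmem p.1 ω).mp h1
    have h2' : 0 ≤ ∑ i ∈ Ico p.1 (p.1 + p.2), X i ω := (hDmem _ _ ω).mp h2
    have h3' : N 1 ω = p.1 + p.2 := h3
    show u < ∑ i ∈ range (N 1 ω), X i ω
    rw [h3', range_eq_Ico,
      ← Finset.sum_Ico_consecutive _ (Nat.zero_le p.1) (Nat.le_add_right p.1 p.2),
      ← range_eq_Ico]
    linarith
  have hEval : ∀ p : ℕ × ℕ,
      μ (E p) = (μ (A p.1) * μ (D p.1 (p.1 + p.2))) * μ (N1 ⁻¹' {p.1 + p.2}) := by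
    intro p
    have h1 : A p.1 ∩ D p.1 (p.1 + p.2)
        = Xp ⁻¹' (sA p.1 ∩ sD p.1 (p.1 + p.2)) := by
      rw [Set.preimage_inter]
    have h2 := hfactN (sA p.1 ∩ sD p.1 (p.1 + p.2))
      ((hsAmeas p.1).inter (hsDmeas _ _)) ({p.1 + p.2})
    calc μ (E p) = μ (Xp ⁻¹' (sA p.1 ∩ sD p.1 (p.1 + p.2)) ∩ N1 ⁻¹' {p.1 + p.2}) := by
          simp only [hE]
          rw [h1]
      _ = μ (Xp ⁻¹' (sA p.1 ∩ sD p.1 (p.1 + p.2))) * μ (N1 ⁻¹' {p.1 + p.2}) := h2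
      _ = (μ (A p.1) * μ (D p.1 (p.1 + p.2))) * μ (N1 ⁻¹' {p.1 + p.2}) := by
          rw [← h1, hsplitAD]
  have hden : ∑' p : ℕ × ℕ, μ (E p) ≤ μ {ω | ∑ i ∈ range (N 1 ω), X i ω > u} := by
    rw [← measure_iUnion hEdisj hEmeas]
    exact measure_mono (Set.iUnion_subset hEsub)
  -- sum manipulations
  have hinner : ∀ k : ℕ,
      ENNReal.ofReal ((1 + Real.exp (-l)) / 2) * (μ (A k) * μ (N1 ⁻¹' Set.Ici k))
        ≤ ∑' m : ℕ, μ (E (k, m)) := by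
    intro k
    set a := μ (A k)
    set g := μ (N1 ⁻¹' Set.Ici k)
    set qk := μ (N1 ⁻¹' {k})
    set r : ℝ≥0∞ := ∑' m : ℕ, μ (N1 ⁻¹' {k + m + 1}) with hr
    have h2 : ∑' m : ℕ, μ (N1 ⁻¹' {k + (m + 1)}) = r := by
      rw [hr]
      exact tsum_congr fun m => by rw [show k + (m + 1) = k + m + 1 from by omega]
    have hgsplit : g = qk + r := by
      calc g = μ (N1 ⁻¹' {k + 0}) + ∑' m : ℕ, μ (N1 ⁻¹' {k + (m + 1)}) := by
            rw [show g = ∑' m : ℕ, μ (N1 ⁻¹' {k + m}) from hGeq k,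
              tsum_eq_zero_add' ENNReal.summable]
        _ = qk + r := by rw [h2, Nat.add_zero]
    have hsplitlow : a * qk + 2⁻¹ * (a * r) ≤ ∑' m : ℕ, μ (E (k, m)) := by
      rw [tsum_eq_zero_add' ENNReal.summable]
      have h0 : μ (E (k, 0)) = a * qk := by
        rw [hEval (k, 0)]
        simp only []
        rw [show k + 0 = k from rfl]  -- may need adjusting
        rw [hDone k, mul_one]
      have hrest : 2⁻¹ * (a * r) ≤ ∑' m : ℕ, μ (E (k, m + 1)) := by
        rw [hr, ← ENNReal.tsum_mul_left, ← ENNReal.tsum_mul_left]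
        refine ENNReal.tsum_le_tsum fun m => ?_
        rw [hEval (k, m + 1)]
        have : 2⁻¹ * (a * μ (N1 ⁻¹' {k + m + 1}))
            = (a * 2⁻¹) * μ (N1 ⁻¹' {k + m + 1}) := by ring
        rw [this, show k + (m + 1) = k + m + 1 from by omega]
        exact mul_le_mul_left (mul_le_mul_right (hDhalf k (k + m + 1)) a) _
      rw [h0]
      exact add_le_add le_rfl hrest
    refine le_trans ?_ hsplitlow
    have hcoef : ENNReal.ofReal ((1 + Real.exp (-l)) / 2)
        = 2⁻¹ + 2⁻¹ * ENNReal.ofReal (Real.exp (-l)) := by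
      rw [ENNReal.ofReal_div_of_pos two_pos, ENNReal.ofReal_add zero_le_one hexppos.le,
        ENNReal.ofReal_one, ENNReal.ofReal_ofNat, ENNReal.add_div]
      congr 1
      · rw [ENNReal.div_eq_inv_mul, mul_one]
      · rw [ENNReal.div_eq_inv_mul, mul_comm]  -- maybe not needed
    have htail' : ENNReal.ofReal (Real.exp (-l)) * (a * g) ≤ a * qk := by
      calc ENNReal.ofReal (Real.exp (-l)) * (a * g)
          = a * (ENNReal.ofReal (Real.exp (-l)) * g) := by ring
        _ ≤ a * qk := mul_le_mul_right (htail k) a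
    calc ENNReal.ofReal ((1 + Real.exp (-l)) / 2) * (a * g)
        = 2⁻¹ * (a * g) + 2⁻¹ * (ENNReal.ofReal (Real.exp (-l)) * (a * g)) := by
          rw [hcoef]; ring
      _ ≤ 2⁻¹ * (a * (qk + r)) + 2⁻¹ * (a * qk) := by
          refine add_le_add ?_ (mul_le_mul_right htail' _)
          rw [hgsplit]
      _ = (2⁻¹ * (a * qk) + 2⁻¹ * (a * qk)) + 2⁻¹ * (a * r) := by ring
      _ = a * qk + 2⁻¹ * (a * r) := by
          congr 1
          rw [← two_mul, ← mul_assoc, ENNReal.mul_inv_cancel (by norm_num) (by norm_num),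
            one_mul]
  -- assemble
  have hlower : ENNReal.ofReal ((1 + Real.exp (-l)) / 2)
      * μ {ω | (⨆ t : Set.Icc (0:ℝ) 1, ∑ i ∈ range (N (t : ℝ) ω), X i ω) > u}
        ≤ μ {ω | ∑ i ∈ range (N 1 ω), X i ω > u} := by
    refine le_trans ?_ hden
    rw [ENNReal.tsum_prod']
    calc ENNReal.ofReal ((1 + Real.exp (-l)) / 2)
        * μ {ω | (⨆ t : Set.Icc (0:ℝ) 1, ∑ i ∈ range (N (t : ℝ) ω), X i ω) > u}
        ≤ ENNReal.ofReal ((1 + Real.exp (-l)) / 2)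
            * ∑' k : ℕ, μ (A k) * μ (N1 ⁻¹' Set.Ici k) := mul_le_mul_right hnum _
      _ = ∑' k : ℕ, ENNReal.ofReal ((1 + Real.exp (-l)) / 2)
            * (μ (A k) * μ (N1 ⁻¹' Set.Ici k)) := ENNReal.tsum_mul_left.symm
      _ ≤ ∑' k : ℕ, ∑' m : ℕ, μ (E (k, m)) := ENNReal.tsum_le_tsum hinner
  have hcc : (2 / (1 + Real.exp (-l))) * ((1 + Real.exp (-l)) / 2) = 1 := by
    have h0 : (1 + Real.exp (-l)) ≠ 0 := by positivity
    field_simp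
  calc μ {ω | (⨆ t : Set.Icc (0:ℝ) 1, ∑ i ∈ range (N (t : ℝ) ω), X i ω) > u}
      = (ENNReal.ofReal (2 / (1 + Real.exp (-l)))
          * ENNReal.ofReal ((1 + Real.exp (-l)) / 2))
          * μ {ω | (⨆ t : Set.Icc (0:ℝ) 1, ∑ i ∈ range (N (t : ℝ) ω), X i ω) > u} := by
        rw [← ENNReal.ofReal_mul (by positivity), hcc, ENNReal.ofReal_one, one_mul]
    _ = ENNReal.ofReal (2 / (1 + Real.exp (-l)))
          * (ENNReal.ofReal ((1 + Real.exp (-l)) / 2)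
            * μ {ω | (⨆ t : Set.Icc (0:ℝ) 1, ∑ i ∈ range (N (t : ℝ) ω), X i ω) > u}) :=
        mul_assoc _ _ _
    _ ≤ ENNReal.ofReal (2 / (1 + Real.exp (-l)))
          * μ {ω | ∑ i ∈ range (N 1 ω), X i ω > u} := mul_le_mul_right hlower _

theorem symmetric_compound_poisson_limsup_lt_two
    {Ω : Type*} [MeasurableSpace Ω] (μ : Measure Ω) [IsProbabilityMeasure μ]
    (N : ℝ → Ω → ℕ) (X : ℕ → Ω → ℝ) (l : ℝ)
    -- N is a Poisson process with rate l
    (hl : 0 < l)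
    (hNmeas : ∀ t, Measurable (N t))
    (hN0 : ∀ ω, N 0 ω = 0)
    (hNmono : ∀ ω, ∀ ⦃s t : ℝ⦄, s ≤ t → N s ω ≤ N t ω)
    (hNincr : ∀ s t : ℝ, 0 ≤ s → s ≤ t → ∀ n : ℕ,
        μ {ω | N t ω - N s ω = n}
          = ENNReal.ofReal (Real.exp (-(l * (t - s))) * (l * (t - s)) ^ n
              / (Nat.factorial n)))
    (hNind : ∀ n : ℕ, ∀ t : Fin (n + 1) → ℝ, Monotone t → (∀ i, 0 ≤ t i) →
        iIndepFun
          (fun i : Fin n => fun ω => N (t i.succ) ω - N (t i.castSucc) ω) μ)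
    -- i.i.d. symmetric jumps, independent of N
    (hXmeas : ∀ k, Measurable (X k))
    (hXindep : iIndepFun X μ)
    (hXid : ∀ k, Measure.map (X k) μ = Measure.map (X 0) μ)
    (hXsym : Measure.map (X 0) μ = Measure.map (fun ω => -X 0 ω) μ)
    (hNX : IndepFun (fun ω => fun t : ℝ => N t ω) (fun ω => fun k : ℕ => X k ω) μ)
    (hpos : ∀ u : ℝ, 0 < (μ {ω | ∑ i ∈ range (N 1 ω), X i ω > u}).toReal) :
    Filter.limsup (fun u : ℝ =>
        (μ {ω | (⨆ t : Set.Icc (0:ℝ) 1, ∑ i ∈ range (N (t : ℝ) ω), X i ω) > u}).toReal /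
          (μ {ω | ∑ i ∈ range (N 1 ω), X i ω > u}).toReal) atTop < 2 := by
  classical
  have hexppos : 0 < Real.exp (-l) := Real.exp_pos _
  set c : ℝ := 2 / (1 + Real.exp (-l)) with hc
  have hcpos : 0 < c := by positivity
  -- the key uniform bound
  have key : ∀ u : ℝ,
      μ {ω | (⨆ t : Set.Icc (0:ℝ) 1, ∑ i ∈ range (N (t : ℝ) ω), X i ω) > u}
        ≤ ENNReal.ofReal c * μ {ω | ∑ i ∈ range (N 1 ω), X i ω > u} :=
    fun u => aux_key μ N X l hl hNmeas hN0 hNmono hNincr hXmeas hXindep hXid hXsym hNX u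
  -- deduce pointwise real bound
  have hbound : ∀ u : ℝ,
      (μ {ω | (⨆ t : Set.Icc (0:ℝ) 1, ∑ i ∈ range (N (t : ℝ) ω), X i ω) > u}).toReal /
        (μ {ω | ∑ i ∈ range (N 1 ω), X i ω > u}).toReal ≤ c := by
    intro u
    have hfin : ENNReal.ofReal c * μ {ω | ∑ i ∈ range (N 1 ω), X i ω > u} ≠ ∞ :=
      ENNReal.mul_ne_top ENNReal.ofReal_ne_top (measure_ne_top μ _)
    have h1 := ENNReal.toReal_mono hfin (key u)
    rw [ENNReal.toReal_mul, ENNReal.toReal_ofReal hcpos.le] at h1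
    rw [div_le_iff₀ (hpos u)]
    exact h1
  have hlt : c < 2 := by
    rw [hc, div_lt_iff₀ (by positivity)]
    nlinarith [hexppos]
  refine lt_of_le_of_lt ?_ hlt
  have hnn : ∀ u : ℝ, (0:ℝ) ≤
      (μ {ω | (⨆ t : Set.Icc (0:ℝ) 1, ∑ i ∈ range (N (t : ℝ) ω), X i ω) > u}).toReal /
        (μ {ω | ∑ i ∈ range (N 1 ω), X i ω > u}).toReal :=
    fun u => div_nonneg ENNReal.toReal_nonneg ENNReal.toReal_nonneg
  exact Filter.limsup_le_of_le (Filter.isCoboundedUnder_le_of_le atTop hnn)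
    (Filter.Eventually.of_forall hbound)
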